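/- Let y* ∈ ℝ^m, A ∈ ℝ^{m×n}, σ > 0, μ_1, …, μ_M ∈ ℝ^n, τ_1, …, τ_M > 0, and positive weights w_1, …, w_M summing to 1. Set Σ_j = σ² I_m + τ_j² A Aᵀ, s_j(y*) = (1/2)(y* − A μ_j)ᵀ Σ_j⁻¹ (y* − A μ_j), ℓ_j(y*) = s_j(y*) + (1/2) log det(Σ_j), w̃_j(y*) = w_j φ(y*; A μ_j, Σ_j) / ∑_i w_i φ(y*; A μ_i, Σ_i), Σ_{post,j} = (τ_j^{−2} I_n + σ^{−2} Aᵀ A)⁻¹, and m_j(y*) = Σ_{post,j}(τ_j^{−2} μ_j + σ^{−2} Aᵀ y*). Let π(· | y*) = ∑_{j=1}^M w̃_j(y*) N(m_j(y*), Σ_{post,j}). Assume (1) 1/C ≤ w_i/w_j ≤ C for all i, j and some C > 1, and (2) there is a unique minimizer j* of ℓ_j(y*) with (ℓ_{(2)}(y*) − ℓ_{(1)}(y*))/m ≥ δ₀ > 0. Then ‖π(· | y*) − N(m_{j*}(y*), Σ_{post,j*})‖_TV ≤ C·M·exp(−m·δ₀). -/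

import Mathlib

open MeasureTheory Matrix Finset

/-- Multivariate Gaussian density `φ(x; μ, S)` on `ℝ^ι`. -/
noncomputable def gaussDensity {ι : Type*} [Fintype ι] [DecidableEq ι]
    (S : Matrix ι ι ℝ) (μ x : ι → ℝ) : ℝ :=
  (2 * Real.pi) ^ (-(Fintype.card ι : ℝ) / 2) * S.det ^ (-(1 : ℝ) / 2) *
    Real.exp (-(1 / 2) * ((x - μ) ⬝ᵥ (S⁻¹ *ᵥ (x - μ))))

/-- The Gaussian probability measure `N(μ, S)` on `ℝ^ι`, given through its
Lebesgue density. -/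
noncomputable def gaussMeasure {ι : Type*} [Fintype ι] [DecidableEq ι]
    (S : Matrix ι ι ℝ) (μ : ι → ℝ) : Measure (ι → ℝ) :=
  volume.withDensity fun x => ENNReal.ofReal (gaussDensity S μ x)

section aux
variable {ι : Type*} [Fintype ι] [DecidableEq ι]
open scoped MatrixOrder

lemma myPosDefSmul {M : Matrix ι ι ℝ} (hM : M.PosDef) {c : ℝ} (hc : 0 < c) :
    (c • M).PosDef := by
  have ht : Mᵀ = M := by rw [← conjTranspose_eq_transpose_of_trivial, hM.1.eq]
  exact hM.smul hc

lemma myPosSemidefSmul {M : Matrix ι ι ℝ} (hM : M.PosSemidef) {c : ℝ} (hc : 0 ≤ c) :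
    (c • M).PosSemidef := by
  have ht : Mᵀ = M := by rw [← conjTranspose_eq_transpose_of_trivial, hM.1.eq]
  exact hM.smul hc

lemma gaussDensity_pos {S : Matrix ι ι ℝ} (hS : S.PosDef) (μ x : ι → ℝ) :
    0 < gaussDensity S μ x :=
  mul_pos (mul_pos (Real.rpow_pos_of_pos (by positivity) _)
    (Real.rpow_pos_of_pos hS.det_pos _)) (Real.exp_pos _)

lemma gauss_core {S : Matrix ι ι ℝ} (hS : S.PosDef) :
    Integrable (fun v : ι → ℝ => Real.exp (-(1 / 2) * (v ⬝ᵥ (S⁻¹ *ᵥ v)))) ∧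
    ∫ v : ι → ℝ, Real.exp (-(1 / 2) * (v ⬝ᵥ (S⁻¹ *ᵥ v)))
      = Real.sqrt S.det * Real.sqrt (2 * Real.pi) ^ (Fintype.card ι) := by
  set f : (ι → ℝ) → ℝ := fun v => Real.exp (-(1 / 2) * (v ⬝ᵥ (S⁻¹ *ᵥ v))) with hf
  set Q := CFC.sqrt S with hQ
  have hQQ : Q * Q = S := CFC.sqrt_mul_sqrt_self S hS.posSemidef.nonneg
  have hdet : S.det = Q.det * Q.det := by rw [← hQQ, det_mul]
  have hQdet : Q.det ≠ 0 := by
    intro h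
    have := hS.det_pos
    rw [hdet, h, mul_zero] at this
    exact lt_irrefl _ this
  have hQsym : Qᵀ = Q := by
    have h := (CFC.sqrt_nonneg S).posSemidef.isHermitian
    rwa [Matrix.IsHermitian, conjTranspose_eq_transpose_of_trivial] at h
  have hQinv : Q * (S⁻¹ * Q) = 1 := by
    rw [← hQQ, Matrix.mul_inv_rev, Matrix.mul_assoc, Matrix.nonsing_inv_mul _ (isUnit_iff_ne_zero.mpr hQdet),
      Matrix.mul_one, Matrix.mul_nonsing_inv _ (isUnit_iff_ne_zero.mpr hQdet)]
  have key : ∀ y : ι → ℝ, (Q *ᵥ y) ⬝ᵥ (S⁻¹ *ᵥ (Q *ᵥ y)) = y ⬝ᵥ y := by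
    intro y
    have h1 : Q *ᵥ y = y ᵥ* Q := by
      calc Q *ᵥ y = Qᵀᵀ *ᵥ y := by rw [transpose_transpose]
        _ = y ᵥ* Qᵀ := mulVec_transpose Qᵀ y
        _ = y ᵥ* Q := by rw [hQsym]
    rw [mulVec_mulVec, h1, dotProduct_mulVec, vecMul_vecMul, hQinv, vecMul_one]
  have hcomp : ∀ y : ι → ℝ, f (Q *ᵥ y) = ∏ i, Real.exp (-(1 / 2) * (y i) ^ 2) := by
    intro y
    show Real.exp (-(1 / 2) * ((Q *ᵥ y) ⬝ᵥ (S⁻¹ *ᵥ (Q *ᵥ y)))) = _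
    rw [key y]
    simp only [dotProduct, Finset.mul_sum, Real.exp_sum]
    exact Finset.prod_congr rfl fun i _ => by rw [sq]
  have hg_int : Integrable (fun y : ι → ℝ => ∏ i, Real.exp (-(1 / 2) * (y i) ^ 2)) := by
    apply Integrable.fintype_prod (f := fun _ : ι => fun t : ℝ => Real.exp (-(1 / 2) * t ^ 2))
    intro i
    have : (0:ℝ) < 1/2 := by norm_num
    simpa [neg_mul] using integrable_exp_neg_mul_sq this
  have hg_val : ∫ y : ι → ℝ, ∏ i, Real.exp (-(1 / 2) * (y i) ^ 2)
      = Real.sqrt (2 * Real.pi) ^ (Fintype.card ι) := by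
    rw [MeasureTheory.integral_fintype_prod_volume_eq_pow (ι := ι) (fun t : ℝ => Real.exp (-(1 / 2) * t ^ 2))]
    have h12 : ∫ t : ℝ, Real.exp (-(1 / 2) * t ^ 2) = Real.sqrt (2 * Real.pi) := by
      have := integral_gaussian (1/2)
      simp only [neg_mul] at this ⊢
      rw [this, show Real.pi / (1/2) = 2 * Real.pi by ring]
    rw [h12]
  -- continuity of f
  have hq_cont : Continuous fun v : ι → ℝ => v ⬝ᵥ (S⁻¹ *ᵥ v) := by
    simp only [dotProduct, mulVec]
    exact continuous_finset_sum _ fun i _ => (continuous_apply i).mul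
      (continuous_finset_sum _ fun j _ => continuous_const.mul (continuous_apply j))
  have hfc : Continuous f := Real.continuous_exp.comp (continuous_const.mul hq_cont)
  have hT : Measurable (Matrix.toLin' Q) :=
    (LinearMap.continuous_of_finiteDimensional _).measurable
  have hmap : Measure.map (Matrix.toLin' Q) volume
      = ENNReal.ofReal |Q.det⁻¹| • volume :=
    Real.map_matrix_volume_pi_eq_smul_volume_pi hQdet
  have hcne : ENNReal.ofReal |Q.det⁻¹| ≠ 0 := by
    simp only [ne_eq, ENNReal.ofReal_eq_zero, not_le, abs_pos]
    positivity
  have h1 : Integrable (fun y => f (Matrix.toLin' Q y)) := by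
    have he : (fun y => f (Matrix.toLin' Q y))
        = fun y : ι → ℝ => ∏ i, Real.exp (-(1 / 2) * (y i) ^ 2) := by
      funext y; rw [Matrix.toLin'_apply]; exact hcomp y
    rw [he]; exact hg_int
  have hf_int : Integrable f := by
    have h2 : Integrable f (Measure.map (Matrix.toLin' Q) volume) := by
      rw [integrable_map_measure hfc.aestronglyMeasurable hT.aemeasurable]
      exact h1
    rw [hmap] at h2
    exact (integrable_smul_measure hcne ENNReal.ofReal_ne_top).mp h2
  refine ⟨hf_int, ?_⟩
  have hval : ∫ y, f (Matrix.toLin' Q y) = |Q.det⁻¹| * ∫ v, f v := by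
    rw [← MeasureTheory.integral_map hT.aemeasurable hfc.aestronglyMeasurable, hmap,
      integral_smul_measure, ENNReal.toReal_ofReal (abs_nonneg _), smul_eq_mul]
  have hval2 : ∫ y, f (Matrix.toLin' Q y) = Real.sqrt (2 * Real.pi) ^ (Fintype.card ι) := by
    have he : (fun y => f (Matrix.toLin' Q y))
        = fun y : ι → ℝ => ∏ i, Real.exp (-(1 / 2) * (y i) ^ 2) := by
      funext y; rw [Matrix.toLin'_apply]; exact hcomp y
    rw [he]; exact hg_val
  have habs : |Q.det| = Real.sqrt S.det := by
    rw [hdet, Real.sqrt_mul_self_eq_abs]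
  have habsne : |Q.det⁻¹| ≠ 0 := by simpa using hQdet
  have : |Q.det⁻¹| * ∫ v, f v = Real.sqrt (2 * Real.pi) ^ (Fintype.card ι) := by
    rw [← hval, hval2]
  calc ∫ v, f v = |Q.det| * (|Q.det⁻¹| * ∫ v, f v) := by
        rw [← mul_assoc, abs_inv, mul_inv_cancel₀ (by simpa using hQdet), one_mul]
    _ = Real.sqrt S.det * Real.sqrt (2 * Real.pi) ^ (Fintype.card ι) := by
        rw [this, habs]

lemma gaussDensity_integrable {S : Matrix ι ι ℝ} (hS : S.PosDef) (μ : ι → ℝ) :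
    Integrable (gaussDensity S μ) := by
  have h := (gauss_core hS).1
  have h2 : Integrable (fun x : ι → ℝ =>
      Real.exp (-(1 / 2) * ((x - μ) ⬝ᵥ (S⁻¹ *ᵥ (x - μ))))) := by
    have := h.comp_sub_right (g := μ)
    simpa using this
  have := (h2.const_mul ((2 * Real.pi) ^ (-(Fintype.card ι : ℝ) / 2) * S.det ^ (-(1:ℝ)/2)))
  unfold gaussDensity
  simpa [mul_assoc] using this

lemma gaussDensity_integral {S : Matrix ι ι ℝ} (hS : S.PosDef) (μ : ι → ℝ) :
    ∫ x : ι → ℝ, gaussDensity S μ x = 1 := by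
  have hcore := (gauss_core hS).2
  have htrans : ∫ x : ι → ℝ, Real.exp (-(1 / 2) * ((x - μ) ⬝ᵥ (S⁻¹ *ᵥ (x - μ))))
      = ∫ v : ι → ℝ, Real.exp (-(1 / 2) * (v ⬝ᵥ (S⁻¹ *ᵥ v))) :=
    integral_sub_right_eq_self (fun v => Real.exp (-(1 / 2) * (v ⬝ᵥ (S⁻¹ *ᵥ v)))) μ
  unfold gaussDensity
  rw [integral_const_mul, htrans, hcore]
  set d := Fintype.card ι
  have h2π : (0:ℝ) < 2 * Real.pi := by positivity
  have hsd : Real.sqrt S.det = S.det ^ ((1:ℝ)/2) := by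
    rw [Real.sqrt_eq_rpow]
  have hs2π : (Real.sqrt (2 * Real.pi)) ^ d = (2 * Real.pi) ^ ((d:ℝ)/2) := by
    rw [Real.sqrt_eq_rpow, ← Real.rpow_natCast ((2*Real.pi) ^ ((1:ℝ)/2)) d,
      ← Real.rpow_mul h2π.le]
    ring_nf
  rw [hsd, hs2π]
  have e1 : S.det ^ (-(1:ℝ)/2) * S.det ^ ((1:ℝ)/2) = 1 := by
    rw [← Real.rpow_add hS.det_pos]; norm_num
  have e2 : (2 * Real.pi) ^ (-(d:ℝ)/2) * (2 * Real.pi) ^ ((d:ℝ)/2) = 1 := by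
    rw [← Real.rpow_add h2π, show (-(d:ℝ)/2 + (d:ℝ)/2) = 0 by ring, Real.rpow_zero]
  calc (2 * Real.pi) ^ (-(d:ℝ)/2) * S.det ^ (-(1:ℝ)/2) *
        (S.det ^ ((1:ℝ)/2) * (2 * Real.pi) ^ ((d:ℝ)/2))
      = ((2 * Real.pi) ^ (-(d:ℝ)/2) * (2 * Real.pi) ^ ((d:ℝ)/2)) *
        (S.det ^ (-(1:ℝ)/2) * S.det ^ ((1:ℝ)/2)) := by ring
    _ = 1 := by rw [e1, e2, mul_one]

lemma gaussMeasure_univ {S : Matrix ι ι ℝ} (hS : S.PosDef) (μ : ι → ℝ) :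
    gaussMeasure S μ Set.univ = 1 := by
  rw [gaussMeasure, withDensity_apply _ MeasurableSet.univ, Measure.restrict_univ,
    ← ofReal_integral_eq_lintegral_ofReal (gaussDensity_integrable hS μ)
      (Filter.Eventually.of_forall fun x => (gaussDensity_pos hS μ x).le),
    gaussDensity_integral hS μ]
  simp

lemma gaussMeasure_le_one {S : Matrix ι ι ℝ} (hS : S.PosDef) (μ : ι → ℝ) (B : Set (ι → ℝ)) :
    gaussMeasure S μ B ≤ 1 := by
  rw [← gaussMeasure_univ hS μ]
  exact measure_mono (Set.subset_univ B)

end aux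

/-- Posterior collapse in total variation to the best selection-score mode for a
heterogeneous-variance Gaussian-mixture prior under a linear Gaussian measurement
model.  The total-variation bound is stated as a uniform bound over measurable sets. -/
theorem stmt_3 (m n M : ℕ) (hm : 0 < m)
    (ystar : Fin m → ℝ) (A : Matrix (Fin m) (Fin n) ℝ)
    (σ : ℝ) (hσ : 0 < σ)
    (μ : Fin M → Fin n → ℝ) (τ : Fin M → ℝ) (hτ : ∀ j, 0 < τ j)
    (w : Fin M → ℝ) (hw : ∀ j, 0 < w j) (hwsum : ∑ j, w j = 1)
    -- Σ_j = σ² I_m + τ_j² A Aᵀ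
    (Cov : Fin M → Matrix (Fin m) (Fin m) ℝ)
    (hCov : ∀ j, Cov j =
      σ ^ 2 • (1 : Matrix (Fin m) (Fin m) ℝ) + (τ j) ^ 2 • (A * Aᵀ))
    -- scores s_j(y*)
    (s : Fin M → ℝ)
    (hs : ∀ j, s j =
      (1 / 2) * ((ystar - A *ᵥ μ j) ⬝ᵥ ((Cov j)⁻¹ *ᵥ (ystar - A *ᵥ μ j))))
    -- selection scores ℓ_j(y*)
    (ℓ : Fin M → ℝ)
    (hℓ : ∀ j, ℓ j = s j + (1 / 2) * Real.log (Cov j).det)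
    -- normalized posterior weights
    (wt : Fin M → ℝ)
    (hwt : ∀ j, wt j =
      w j * gaussDensity (Cov j) (A *ᵥ μ j) ystar /
        ∑ i, w i * gaussDensity (Cov i) (A *ᵥ μ i) ystar)
    -- posterior covariances Σ_{post,j} = (τ_j⁻² I_n + σ⁻² Aᵀ A)⁻¹
    (CovPost : Fin M → Matrix (Fin n) (Fin n) ℝ)
    (hCovPost : ∀ j, CovPost j =
      (((τ j) ^ 2)⁻¹ • (1 : Matrix (Fin n) (Fin n) ℝ) + (σ ^ 2)⁻¹ • (Aᵀ * A))⁻¹)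
    -- posterior means m_j(y*) = Σ_{post,j}(τ_j⁻² μ_j + σ⁻² Aᵀ y*)
    (mpost : Fin M → Fin n → ℝ)
    (hmpost : ∀ j, mpost j =
      (CovPost j) *ᵥ (((τ j) ^ 2)⁻¹ • μ j + (σ ^ 2)⁻¹ • (Aᵀ *ᵥ ystar)))
    -- the posterior mixture π(· | y*) = ∑_j w̃_j N(m_j(y*), Σ_{post,j})
    (post : Measure (Fin n → ℝ))
    (hpost : post = ∑ j, ENNReal.ofReal (wt j) • gaussMeasure (CovPost j) (mpost j))
    -- (1) bounded weight ratio
    (C : ℝ) (hC : 1 < C)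
    (hratio : ∀ i j, 1 / C ≤ w i / w j ∧ w i / w j ≤ C)
    -- (2) δ₀-identifiability in selection score
    (jstar : Fin M) (hmin : ∀ j, j ≠ jstar → ℓ jstar < ℓ j)
    (δ₀ : ℝ) (hδ₀ : 0 < δ₀)
    (hgap : ∀ j, j ≠ jstar → δ₀ ≤ (ℓ j - ℓ jstar) / m) :
    ∀ B : Set (Fin n → ℝ), MeasurableSet B →
      |(post B).toReal - ((gaussMeasure (CovPost jstar) (mpost jstar)) B).toReal| ≤
        C * M * Real.exp (-(m : ℝ) * δ₀) := by
  
  intro B hB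
  have hCovPD : ∀ j, (Cov j).PosDef := by
    intro j
    rw [hCov j]
    refine Matrix.PosDef.add_posSemidef
      (myPosDefSmul Matrix.PosDef.one (pow_pos hσ 2))
      (myPosSemidefSmul ?_ (sq_nonneg (τ j)))
    have h := Matrix.posSemidef_self_mul_conjTranspose A
    rwa [conjTranspose_eq_transpose_of_trivial] at h
  have hPostPD : ∀ j, (CovPost j).PosDef := by
    intro j
    rw [hCovPost j]
    refine Matrix.PosDef.inv (Matrix.PosDef.add_posSemidef
      (myPosDefSmul Matrix.PosDef.one (inv_pos.mpr (pow_pos (hτ j) 2)))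
      (myPosSemidefSmul ?_ (inv_nonneg.mpr (sq_nonneg σ))))
    have h := Matrix.posSemidef_conjTranspose_mul_self A
    rwa [conjTranspose_eq_transpose_of_trivial] at h
  have hmR : (0:ℝ) < m := by exact_mod_cast hm
  set K : ℝ := (2 * Real.pi) ^ (-(m:ℝ)/2) with hK
  have hKpos : 0 < K := Real.rpow_pos_of_pos (by positivity) _
  have hφ : ∀ j, gaussDensity (Cov j) (A *ᵥ μ j) ystar = K * Real.exp (-(ℓ j)) := by
    intro j
    have hdp : 0 < (Cov j).det := (hCovPD j).det_pos
    unfold gaussDensity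
    rw [Fintype.card_fin, Real.rpow_def_of_pos hdp, mul_assoc, ← Real.exp_add, hℓ j, hs j]
    congr 1
    ring
  have hterm : ∀ i, 0 < w i * gaussDensity (Cov i) (A *ᵥ μ i) ystar := fun i =>
    mul_pos (hw i) (gaussDensity_pos (hCovPD i) _ _)
  have hDpos : 0 < ∑ i, w i * gaussDensity (Cov i) (A *ᵥ μ i) ystar :=
    Finset.sum_pos (fun i _ => hterm i) ⟨jstar, Finset.mem_univ jstar⟩
  have hwt0 : ∀ j, 0 ≤ wt j := fun j => by
    rw [hwt j]; exact div_nonneg (hterm j).le hDpos.le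
  have hwtsum : ∑ j, wt j = 1 := by
    simp_rw [hwt]
    rw [← Finset.sum_div, div_self hDpos.ne']
  have hwtle : ∀ j, j ≠ jstar → wt j ≤ C * Real.exp (-(m:ℝ) * δ₀) := by
    intro j hj
    have hjs : 0 < w jstar * gaussDensity (Cov jstar) (A *ᵥ μ jstar) ystar := hterm jstar
    have hden_le : w jstar * gaussDensity (Cov jstar) (A *ᵥ μ jstar) ystar ≤
        ∑ i, w i * gaussDensity (Cov i) (A *ᵥ μ i) ystar :=
      Finset.single_le_sum (fun i _ => (hterm i).le) (Finset.mem_univ jstar)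
    rw [hwt j]
    have h1 : w j * gaussDensity (Cov j) (A *ᵥ μ j) ystar /
          (∑ i, w i * gaussDensity (Cov i) (A *ᵥ μ i) ystar) ≤
        w j * gaussDensity (Cov j) (A *ᵥ μ j) ystar /
          (w jstar * gaussDensity (Cov jstar) (A *ᵥ μ jstar) ystar) := by
      rw [div_le_div_iff₀ hDpos hjs]
      exact mul_le_mul_of_nonneg_left hden_le (hterm j).le
    have h2 : w j * gaussDensity (Cov j) (A *ᵥ μ j) ystar /
          (w jstar * gaussDensity (Cov jstar) (A *ᵥ μ jstar) ystar) =
        (w j / w jstar) * Real.exp (ℓ jstar - ℓ j) := by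
      rw [hφ j, hφ jstar, Real.exp_neg, Real.exp_neg, Real.exp_sub]
      field_simp [hKpos.ne', (hw jstar).ne', Real.exp_ne_zero]
    have h3 : Real.exp (ℓ jstar - ℓ j) ≤ Real.exp (-(m:ℝ) * δ₀) := by
      apply Real.exp_le_exp.mpr
      have hg := hgap j hj
      rw [le_div_iff₀ hmR, mul_comm δ₀ (m:ℝ)] at hg
      linarith
    have h4 : w j / w jstar ≤ C := (hratio j jstar).2
    calc w j * gaussDensity (Cov j) (A *ᵥ μ j) ystar /
          (∑ i, w i * gaussDensity (Cov i) (A *ᵥ μ i) ystar)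
        ≤ (w j / w jstar) * Real.exp (ℓ jstar - ℓ j) := by rw [← h2]; exact h1
      _ ≤ C * Real.exp (-(m:ℝ) * δ₀) :=
          mul_le_mul h4 h3 (Real.exp_pos _).le (zero_le_one.trans hC.le)
  have hνB : ∀ j, gaussMeasure (CovPost j) (mpost j) B ≤ 1 := fun j =>
    gaussMeasure_le_one (hPostPD j) _ B
  set nB : Fin M → ℝ := fun j => (gaussMeasure (CovPost j) (mpost j) B).toReal with hnB
  have hn0 : ∀ j, 0 ≤ nB j := fun j => ENNReal.toReal_nonneg
  have hn1 : ∀ j, nB j ≤ 1 := fun j => by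
    have h := ENNReal.toReal_mono ENNReal.one_ne_top (hνB j)
    simpa using h
  have hpostB : (post B).toReal = ∑ j, wt j * nB j := by
    rw [hpost, Measure.finset_sum_apply, ENNReal.toReal_sum]
    · refine Finset.sum_congr rfl fun j _ => ?_
      rw [Measure.smul_apply, smul_eq_mul, ENNReal.toReal_mul,
        ENNReal.toReal_ofReal (hwt0 j)]
    · intro j _
      rw [Measure.smul_apply, smul_eq_mul]
      exact ENNReal.mul_ne_top ENNReal.ofReal_ne_top
        ((hνB j).trans_lt ENNReal.one_lt_top).ne
  rw [hpostB]
  have hns : ((gaussMeasure (CovPost jstar) (mpost jstar)) B).toReal = nB jstar := rfl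
  rw [hns]
  have hsplit : ∑ j ∈ Finset.univ.erase jstar, wt j * (nB j - nB jstar)
      = ∑ j, wt j * nB j - nB jstar := by
    rw [Finset.sum_erase _ (by simp)]
    simp only [mul_sub]
    rw [Finset.sum_sub_distrib, ← Finset.sum_mul, hwtsum, one_mul]
  rw [← hsplit]
  have hEpos : 0 ≤ C * Real.exp (-(m:ℝ) * δ₀) :=
    mul_nonneg (zero_le_one.trans hC.le) (Real.exp_pos _).le
  calc |∑ j ∈ Finset.univ.erase jstar, wt j * (nB j - nB jstar)|
      ≤ ∑ j ∈ Finset.univ.erase jstar, |wt j * (nB j - nB jstar)| :=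
        Finset.abs_sum_le_sum_abs _ _
    _ ≤ ∑ _j ∈ Finset.univ.erase jstar, C * Real.exp (-(m:ℝ) * δ₀) := by
        refine Finset.sum_le_sum fun j hj => ?_
        have hj' : j ≠ jstar := Finset.ne_of_mem_erase hj
        rw [abs_mul, abs_of_nonneg (hwt0 j)]
        have hd : |nB j - nB jstar| ≤ 1 :=
          abs_le.mpr ⟨by linarith [hn0 j, hn1 jstar], by linarith [hn1 j, hn0 jstar]⟩
        calc wt j * |nB j - nB jstar| ≤ wt j * 1 :=
              mul_le_mul_of_nonneg_left hd (hwt0 j)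
          _ = wt j := mul_one _
          _ ≤ C * Real.exp (-(m:ℝ) * δ₀) := hwtle j hj'
    _ ≤ ∑ _j : Fin M, C * Real.exp (-(m:ℝ) * δ₀) :=
        Finset.sum_le_sum_of_subset_of_nonneg (Finset.subset_univ _)
          (fun _ _ _ => hEpos)
    _ = (M:ℝ) * (C * Real.exp (-(m:ℝ) * δ₀)) := by
        rw [Finset.sum_const, Finset.card_univ, Fintype.card_fin, nsmul_eq_mul]
    _ = C * M * Real.exp (-(m:ℝ) * δ₀) := by ring
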